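/- Let φ(t) := (2π)^{-1/2} e^{-t²/2}, Φ(z) := ∫_{-∞}^{z} φ(t) dt, and for ρ ∈ (−1,1) let h_ρ(x,y) := (2π√(1−ρ²))^{-1} exp(−(x² − 2ρxy + y²)/(2(1−ρ²))). Then for every ρ ∈ (−1,1) and every b ∈ ℝ, the function a ↦ ∫_{-∞}^{a} ∫_{-∞}^{b} h_ρ(x, y) dy dx − Φ(a)Φ(b) is differentiable at every a ∈ ℝ, with derivative φ(a) · (Φ((b − ρa)/√(1−ρ²)) − Φ(b)). -/

import Mathlib

open Real MeasureTheory

/-- The standard normal density `φ(t) = (2π)^{-1/2} e^{-t²/2}`. -/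
noncomputable def stdNormalPDF (t : ℝ) : ℝ := (Real.sqrt (2 * π))⁻¹ * Real.exp (-t ^ 2 / 2)

/-- The standard normal distribution function `Φ(z) = ∫_{-∞}^z φ`. -/
noncomputable def stdNormalCDF (z : ℝ) : ℝ := ∫ t in Set.Iic z, stdNormalPDF t

/-- The bivariate standard normal density with correlation `ρ`. -/
noncomputable def biNormPDF (ρ x y : ℝ) : ℝ :=
  (2 * π * Real.sqrt (1 - ρ ^ 2))⁻¹ *
    Real.exp (-(x ^ 2 - 2 * ρ * x * y + y ^ 2) / (2 * (1 - ρ ^ 2)))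

lemma continuous_stdNormalPDF : Continuous stdNormalPDF := by
  unfold stdNormalPDF
  fun_prop

lemma stdNormalPDF_nonneg (t : ℝ) : 0 ≤ stdNormalPDF t := by
  unfold stdNormalPDF
  positivity

lemma stdNormalPDF_integrable : Integrable stdNormalPDF := by
  have h : Integrable (fun t : ℝ => Real.exp (-(1/2 : ℝ) * t ^ 2)) :=
    integrable_exp_neg_mul_sq (by norm_num)
  have := h.const_mul (Real.sqrt (2 * π))⁻¹
  refine this.congr (Filter.Eventually.of_forall fun t => ?_)
  unfold stdNormalPDF
  ring_nf

lemma integral_stdNormalPDF : ∫ t : ℝ, stdNormalPDF t = 1 := by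
  have h : ∫ t : ℝ, Real.exp (-(1/2 : ℝ) * t ^ 2) = Real.sqrt (π / (1/2)) :=
    integral_gaussian (1/2)
  have heq : ∀ t : ℝ, stdNormalPDF t = (Real.sqrt (2 * π))⁻¹ * Real.exp (-(1/2 : ℝ) * t ^ 2) := by
    intro t; unfold stdNormalPDF; ring_nf
  rw [funext heq, integral_const_mul, h]
  have : π / (1/2 : ℝ) = 2 * π := by ring
  rw [this, inv_mul_cancel₀]
  positivity

lemma stdNormalCDF_nonneg (z : ℝ) : 0 ≤ stdNormalCDF z := by
  unfold stdNormalCDF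
  exact setIntegral_nonneg measurableSet_Iic fun t _ => stdNormalPDF_nonneg t

lemma stdNormalCDF_le_one (z : ℝ) : stdNormalCDF z ≤ 1 := by
  unfold stdNormalCDF
  rw [← integral_stdNormalPDF]
  exact setIntegral_le_integral stdNormalPDF_integrable
    (Filter.Eventually.of_forall stdNormalPDF_nonneg)

/-- FTC for `Iic` primitives of continuous integrable functions. -/
lemma hasDerivAt_integral_Iic {g : ℝ → ℝ} (hc : Continuous g) (hi : Integrable g) (a : ℝ) :
    HasDerivAt (fun z : ℝ => ∫ x in Set.Iic z, g x) (g a) a := by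
  have key : ∀ z : ℝ, ∫ x in Set.Iic z, g x = (∫ x in Set.Iic (0:ℝ), g x) + ∫ x in (0:ℝ)..z, g x := by
    intro z
    rw [← intervalIntegral.integral_Iic_sub_Iic hi.integrableOn hi.integrableOn]
    ring
  simp only [funext key]
  have h := intervalIntegral.integral_hasDerivAt_right
    (hc.intervalIntegrable 0 a)
    (hc.stronglyMeasurableAtFilter _ _)
    hc.continuousAt
  simpa using h

lemma hasDerivAt_stdNormalCDF (a : ℝ) : HasDerivAt stdNormalCDF (stdNormalPDF a) a :=
  hasDerivAt_integral_Iic continuous_stdNormalPDF stdNormalPDF_integrable a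

lemma continuous_stdNormalCDF : Continuous stdNormalCDF :=
  continuous_iff_continuousAt.2 fun a => (hasDerivAt_stdNormalCDF a).continuousAt

/-- translation substitution on `Iic`. -/
lemma integral_comp_sub_right_Iic (f : ℝ → ℝ) (a c : ℝ) :
    ∫ x in Set.Iic a, f (x - c) = ∫ x in Set.Iic (a - c), f x := by
  have h := (measurePreserving_add_right volume c).setIntegral_preimage_emb
    (MeasurableEquiv.addRight c).measurableEmbedding (fun y => f (y - c)) (Set.Iic a)
  simpa [Set.preimage_add_const_Iic] using h.symm

/-- scaling substitution on `Iic`. -/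
lemma integral_comp_mul_left_Iic (g : ℝ → ℝ) (a : ℝ) {c : ℝ} (hc : 0 < c) :
    (∫ x in Set.Iic a, g (c * x)) = c⁻¹ • ∫ x in Set.Iic (c * a), g x := by
  have hms : ∀ d : ℝ, MeasurableSet (Set.Iic d) := fun d => measurableSet_Iic
  rw [← integral_indicator (hms a), ← integral_indicator (hms (c * a)),
    ← abs_of_pos (inv_pos.mpr hc), ← Measure.integral_comp_mul_left]
  congr 1
  ext1 x
  rw [← Set.indicator_comp_right,
    show HMul.hMul c ⁻¹' Set.Iic (c * a) = Set.Iic (c * a / c) by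
      ext y; exact Set.ext_iff.1 (Set.preimage_const_mul_Iic₀ (c * a) hc) y,
    mul_div_cancel_left₀ _ hc.ne']
  rfl

section Main

variable {ρ : ℝ} (hρ : ρ ∈ Set.Ioo (-1 : ℝ) 1)

lemma s_pos (hρ : ρ ∈ Set.Ioo (-1 : ℝ) 1) : 0 < Real.sqrt (1 - ρ ^ 2) := by
  have : ρ ^ 2 < 1 := by nlinarith [hρ.1, hρ.2]
  exact Real.sqrt_pos.2 (by linarith)

lemma sq_s (hρ : ρ ∈ Set.Ioo (-1 : ℝ) 1) :
    Real.sqrt (1 - ρ ^ 2) ^ 2 = 1 - ρ ^ 2 := by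
  have : ρ ^ 2 < 1 := by nlinarith [hρ.1, hρ.2]
  rw [Real.sq_sqrt (by linarith)]

/-- Pointwise factorization of the bivariate density. -/
lemma biNormPDF_eq (hρ : ρ ∈ Set.Ioo (-1 : ℝ) 1) (x y : ℝ) :
    biNormPDF ρ x y =
      stdNormalPDF x * ((Real.sqrt (1 - ρ ^ 2))⁻¹ *
        stdNormalPDF ((y - ρ * x) / Real.sqrt (1 - ρ ^ 2))) := by
  set s := Real.sqrt (1 - ρ ^ 2) with hs
  have hs0 : 0 < s := s_pos hρ
  have hs2 : s ^ 2 = 1 - ρ ^ 2 := sq_s hρ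
  unfold biNormPDF stdNormalPDF
  have hsqrt2pi : Real.sqrt (2 * π) * Real.sqrt (2 * π) = 2 * π := by
    rw [Real.mul_self_sqrt (by positivity)]
  have hu : (1 - ρ ^ 2) ≠ 0 := by nlinarith [hρ.1, hρ.2]
  have hdp : ((y - ρ * x) / s) ^ 2 = (y - ρ * x) ^ 2 / (1 - ρ ^ 2) := by
    rw [div_pow, hs2]
  have hexp : -(x ^ 2 - 2 * ρ * x * y + y ^ 2) / (2 * (1 - ρ ^ 2)) =
      -x ^ 2 / 2 + -((y - ρ * x) / s) ^ 2 / 2 := by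
    rw [hdp]
    field_simp
    ring
  rw [hexp, Real.exp_add]
  have hcoef : (2 * π * s)⁻¹ =
      (Real.sqrt (2 * π))⁻¹ * (s⁻¹ * (Real.sqrt (2 * π))⁻¹) := by
    have h2pis : 2 * π * s = Real.sqrt (2 * π) * (Real.sqrt (2 * π) * s) := by
      rw [← mul_assoc, hsqrt2pi]
    rw [h2pis, mul_inv, mul_inv]
    ring
  rw [hcoef]; ring

/-- The inner integral computes to `φ(x) Φ((b-ρx)/s)`. -/
lemma inner_integral (hρ : ρ ∈ Set.Ioo (-1 : ℝ) 1) (b x : ℝ) :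
    ∫ y in Set.Iic b, biNormPDF ρ x y =
      stdNormalPDF x * stdNormalCDF ((b - ρ * x) / Real.sqrt (1 - ρ ^ 2)) := by
  set s := Real.sqrt (1 - ρ ^ 2) with hs
  have hs0 : 0 < s := s_pos hρ
  have h1 : ∫ y in Set.Iic b, biNormPDF ρ x y =
      stdNormalPDF x * ∫ y in Set.Iic b, s⁻¹ * stdNormalPDF ((y - ρ * x) / s) := by
    rw [← integral_const_mul]
    exact setIntegral_congr_fun measurableSet_Iic fun y _ => by
      rw [biNormPDF_eq hρ x y]
  rw [h1]
  congr 1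
  rw [integral_const_mul]
  have h2 : ∫ y in Set.Iic b, stdNormalPDF ((y - ρ * x) / s) =
      ∫ y in Set.Iic (b - ρ * x), stdNormalPDF (y / s) :=
    integral_comp_sub_right_Iic (fun y => stdNormalPDF (y / s)) b (ρ * x)
  have h3 : ∫ y in Set.Iic (b - ρ * x), stdNormalPDF (s⁻¹ * y) =
      s • ∫ y in Set.Iic (s⁻¹ * (b - ρ * x)), stdNormalPDF y := by
    rw [integral_comp_mul_left_Iic stdNormalPDF (b - ρ * x) (inv_pos.2 hs0), inv_inv]
  have hdiv : ∀ y : ℝ, y / s = s⁻¹ * y := fun y => by rw [div_eq_inv_mul]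
  rw [h2]
  simp_rw [hdiv]
  rw [h3, stdNormalCDF]
  rw [smul_eq_mul, ← mul_assoc, inv_mul_cancel₀ hs0.ne', one_mul]

/-- The marginal-section function is continuous. -/
lemma F_continuous (hρ : ρ ∈ Set.Ioo (-1 : ℝ) 1) (b : ℝ) :
    Continuous (fun x => ∫ y in Set.Iic b, biNormPDF ρ x y) := by
  have : (fun x => ∫ y in Set.Iic b, biNormPDF ρ x y) =
      fun x => stdNormalPDF x * stdNormalCDF ((b - ρ * x) / Real.sqrt (1 - ρ ^ 2)) :=
    funext (inner_integral hρ b)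
  rw [this]
  exact continuous_stdNormalPDF.mul (continuous_stdNormalCDF.comp (by fun_prop))

lemma F_integrable (hρ : ρ ∈ Set.Ioo (-1 : ℝ) 1) (b : ℝ) :
    Integrable (fun x => ∫ y in Set.Iic b, biNormPDF ρ x y) := by
  refine stdNormalPDF_integrable.mono (F_continuous hρ b).aestronglyMeasurable
    (Filter.Eventually.of_forall fun x => ?_)
  rw [inner_integral hρ b x]
  have h1 : 0 ≤ stdNormalCDF ((b - ρ * x) / Real.sqrt (1 - ρ ^ 2)) := stdNormalCDF_nonneg _
  have h2 : stdNormalCDF ((b - ρ * x) / Real.sqrt (1 - ρ ^ 2)) ≤ 1 := stdNormalCDF_le_one _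
  have h3 : 0 ≤ stdNormalPDF x := stdNormalPDF_nonneg x
  rw [Real.norm_eq_abs, Real.norm_eq_abs, abs_of_nonneg h3, abs_of_nonneg (by positivity)]
  nlinarith

end Main

/-- for `ρ ∈ (-1,1)` and `b : ℝ`, the function
`a ↦ ∫_{-∞}^a ∫_{-∞}^b h_ρ(x,y) dy dx - Φ(a)Φ(b)` is differentiable everywhere, with
derivative `φ(a)(Φ((b - ρa)/√(1-ρ²)) - Φ(b))`. -/
theorem stmt17 (ρ : ℝ) (hρ : ρ ∈ Set.Ioo (-1 : ℝ) 1) (b : ℝ) :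
    ∀ a : ℝ, HasDerivAt
      (fun a : ℝ =>
        (∫ x in Set.Iic a, ∫ y in Set.Iic b, biNormPDF ρ x y) -
          stdNormalCDF a * stdNormalCDF b)
      (stdNormalPDF a *
        (stdNormalCDF ((b - ρ * a) / Real.sqrt (1 - ρ ^ 2)) - stdNormalCDF b)) a := by
  intro a
  have h1 : HasDerivAt (fun z : ℝ => ∫ x in Set.Iic z, ∫ y in Set.Iic b, biNormPDF ρ x y)
      (∫ y in Set.Iic b, biNormPDF ρ a y) a :=
    hasDerivAt_integral_Iic (F_continuous hρ b) (F_integrable hρ b) a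
  have h2 : HasDerivAt (fun z : ℝ => stdNormalCDF z * stdNormalCDF b)
      (stdNormalPDF a * stdNormalCDF b) a :=
    (hasDerivAt_stdNormalCDF a).mul_const (stdNormalCDF b)
  have h := h1.sub h2
  rw [inner_integral hρ b a] at h
  refine h.congr_deriv ?_
  ring
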